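/- Let X be a real random variable with 0 < E|X| < ∞, and let K be the inverse function of G(t) = t²/(H(t) + t M(t)) where H(t) = E[X²1{|X|≤t}] and M(t) = E[|X|1{|X|>t}]. Then K(x)/√x is nondecreasing in x and converges to (E X²)^{1/2} ∈ (0, ∞] as x → ∞. -/

import Mathlib

open MeasureTheory ProbabilityTheory Filter Set
open scoped ProbabilityTheory ENNReal

private lemma aux_min (s t y : ℝ) (hs : 0 < s) (hst : s ≤ t) (hy : 0 ≤ y) :
    s^2 * min (y^2) (t*y) ≤ t^2 * min (y^2) (s*y) := by
  rcases le_total y s with h | h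
  · rw [min_eq_left (by nlinarith), min_eq_left (by nlinarith)]
    have h1 : s^2 <= t^2 := by nlinarith
    exact mul_le_mul_of_nonneg_right h1 (sq_nonneg y)
  · rcases le_total y t with h2 | h2
    · rw [min_eq_left (show y^2 <= t*y by nlinarith),
        min_eq_right (show s*y <= y^2 by nlinarith)]
      have h3 : s*y <= t*t := mul_le_mul hst h2 hy (by linarith)
      nlinarith [mul_le_mul_of_nonneg_left h3 (mul_nonneg hs.le hy)]
    · rw [min_eq_right (show t*y <= y^2 by nlinarith),
        min_eq_right (show s*y <= y^2 by nlinarith)]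
      nlinarith [mul_le_mul_of_nonneg_right hst (mul_nonneg (mul_nonneg hs.le (by linarith : (0:ℝ) <= t)) hy)]

theorem stmt_1 {Ω : Type*} [MeasureSpace Ω] [IsProbabilityMeasure (ℙ : Measure Ω)]
    (X : Ω → ℝ) (hX : Measurable X)
    (hInt : Integrable X) (hpos : 0 < ∫ ω, |X ω|)
    (H M G K : ℝ → ℝ)
    (hH : ∀ t, H t = ∫ ω, (if |X ω| ≤ t then (X ω) ^ 2 else 0))
    (hM : ∀ t, M t = ∫ ω, (if t < |X ω| then |X ω| else 0))
    (hG : ∀ t, G t = t ^ 2 / (H t + t * M t))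
    (hKG : ∀ t > 0, K (G t) = t) (hGK : ∀ x > 0, G (K x) = x) :
    MonotoneOn (fun x => K x / Real.sqrt x) (Ioi 0) ∧
    0 < (∫⁻ ω, ENNReal.ofReal ((X ω) ^ 2)) ^ (1/2 : ℝ) ∧
    Tendsto (fun x => ENNReal.ofReal (K x / Real.sqrt x)) atTop
      (nhds ((∫⁻ ω, ENNReal.ofReal ((X ω) ^ 2)) ^ (1/2 : ℝ))) := by
  have hXabs : Integrable (fun ω => |X ω|) := hInt.abs
  set F : ℝ → ℝ := fun t => ∫ ω, min ((X ω)^2) (t * |X ω|) with hFdef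
  -- measurability / integrability
  have hmeas : ∀ t : ℝ, Measurable (fun ω => min ((X ω)^2) (t * |X ω|)) :=
    fun t => (hX.pow_const 2).min (hX.abs.const_mul t)
  have hintF : ∀ t : ℝ, Integrable (fun ω => min ((X ω)^2) (t * |X ω|)) := by
    intro t
    apply (hXabs.const_mul |t|).mono' (hmeas t).aestronglyMeasurable
    filter_upwards with ω
    rw [Real.norm_eq_abs]
    rcases le_total ((X ω)^2) (t * |X ω|) with h | h
    · rw [min_eq_left h, abs_of_nonneg (sq_nonneg _)]
      calc (X ω)^2 ≤ t * |X ω| := h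
        _ ≤ |t| * |X ω| := mul_le_mul_of_nonneg_right (le_abs_self t) (abs_nonneg _)
    · rw [min_eq_right h, abs_mul, abs_abs]
  have hint1 : ∀ t : ℝ, Integrable (fun ω => if |X ω| ≤ t then (X ω)^2 else 0) := by
    intro t
    apply (integrable_const (t^2)).mono'
    · exact (Measurable.ite (measurableSet_le hX.abs measurable_const)
        (hX.pow_const 2) measurable_const).aestronglyMeasurable
    · filter_upwards with ω
      rw [Real.norm_eq_abs]
      split_ifs with h
      · rw [abs_of_nonneg (sq_nonneg _)]
        calc (X ω)^2 = |X ω|^2 := (sq_abs _).symm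
          _ ≤ t^2 := by nlinarith [abs_nonneg (X ω)]
      · simpa using sq_nonneg t
  have hint2 : ∀ t : ℝ, Integrable (fun ω => if t < |X ω| then |X ω| else 0) := by
    intro t
    apply hXabs.mono'
    · exact (Measurable.ite (measurableSet_lt measurable_const hX.abs)
        hX.abs measurable_const).aestronglyMeasurable
    · filter_upwards with ω
      rw [Real.norm_eq_abs]
      split_ifs with h
      · rw [abs_abs]
      · simpa using abs_nonneg (X ω)
  -- H t + t M t = F t for t > 0
  have hFt_eq : ∀ t : ℝ, 0 < t → H t + t * M t = F t := by
    intro t ht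
    rw [hH, hM, ← integral_const_mul, ← integral_add (hint1 t) ((hint2 t).const_mul t)]
    apply integral_congr_ae
    filter_upwards with ω
    rcases le_or_gt (|X ω|) t with h | h
    · rw [if_pos h, if_neg (not_lt.mpr h), mul_zero, add_zero, min_eq_left]
      calc (X ω)^2 = |X ω| * |X ω| := by rw [← sq_abs]; ring
        _ ≤ t * |X ω| := mul_le_mul_of_nonneg_right h (abs_nonneg _)
    · rw [if_neg (not_le.mpr h), if_pos h, zero_add, min_eq_right]
      calc t * |X ω| ≤ |X ω| * |X ω| := mul_le_mul_of_nonneg_right h.le (abs_nonneg _)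
        _ = (X ω)^2 := by rw [← sq_abs]; ring
  -- F positive
  have hFnonneg : ∀ t : ℝ, 0 < t → ∀ ω, 0 ≤ min ((X ω)^2) (t * |X ω|) :=
    fun t ht ω => le_min (sq_nonneg _) (mul_nonneg ht.le (abs_nonneg _))
  have hFpos : ∀ t : ℝ, 0 < t → 0 < F t := by
    intro t ht
    rcases (integral_nonneg (f := fun ω => min ((X ω)^2) (t * |X ω|)) (hFnonneg t ht)).lt_or_eq with h | h
    · exact h
    · exfalso
      have hz : (fun ω => min ((X ω)^2) (t * |X ω|)) =ᵐ[ℙ] 0 :=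
        (integral_eq_zero_iff_of_nonneg (hFnonneg t ht) (hintF t)).mp h.symm
      have : (fun ω => |X ω|) =ᵐ[ℙ] 0 := by
        filter_upwards [hz] with ω hω
        simp only [Pi.zero_apply] at hω ⊢
        by_contra hne
        have hgt : 0 < |X ω| := lt_of_le_of_ne (abs_nonneg _) (Ne.symm hne)
        have : 0 < min ((X ω)^2) (t * |X ω|) :=
          lt_min ((sq_abs (X ω)) ▸ pow_pos hgt 2) (mul_pos ht hgt)
        linarith
      have : ∫ ω, |X ω| = 0 := integral_eq_zero_of_ae this
      linarith
  -- F monotone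
  have hFmono : Monotone F := by
    intro s t hst
    apply integral_mono (hintF s) (hintF t)
    intro ω
    exact min_le_min le_rfl (mul_le_mul_of_nonneg_right hst (abs_nonneg _))
  -- G on positives
  have hGF : ∀ t : ℝ, 0 < t → G t = t^2 / F t := by
    intro t ht; rw [hG, hFt_eq t ht]
  have hGpos : ∀ t : ℝ, 0 < t → 0 < G t := by
    intro t ht; rw [hGF t ht]; exact div_pos (pow_pos ht 2) (hFpos t ht)
  -- G monotone on positives
  have hGmono : ∀ s t : ℝ, 0 < s → s ≤ t → G s ≤ G t := by
    intro s t hs hst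
    have ht : 0 < t := lt_of_lt_of_le hs hst
    rw [hGF s hs, hGF t ht, div_le_div_iff₀ (hFpos s hs) (hFpos t ht)]
    calc s^2 * F t = ∫ ω, s^2 * min ((X ω)^2) (t * |X ω|) := (integral_const_mul _ _).symm
      _ ≤ ∫ ω, t^2 * min ((X ω)^2) (s * |X ω|) := by
          apply integral_mono ((hintF t).const_mul _) ((hintF s).const_mul _)
          intro ω
          have := aux_min s t (|X ω|) hs hst (abs_nonneg (X ω))
          rwa [sq_abs] at this
      _ = t^2 * F s := integral_const_mul _ _
  have hGstrict : ∀ s t : ℝ, 0 < s → s < t → G s < G t := by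
    intro s t hs hst
    rcases (hGmono s t hs hst.le).lt_or_eq with h | h
    · exact h
    · exfalso
      have : s = t := by
        rw [← hKG s hs, ← hKG t (hs.trans hst), h]
      exact absurd this hst.ne
  -- K positive
  have hKpos : ∀ x : ℝ, 0 < x → 0 < K x := by
    intro x hx
    by_contra h
    push_neg at h
    have hgk := hGK x hx
    rcases h.lt_or_eq with h | h
    · have hH0 : H (K x) = 0 := by
        rw [hH]
        rw [show (fun ω => if |X ω| ≤ K x then (X ω)^2 else 0) = fun _ => (0:ℝ) by
          funext ω; rw [if_neg (not_le.mpr (lt_of_lt_of_le h (abs_nonneg _)))]]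
        simp
      have hM0 : M (K x) = ∫ ω, |X ω| := by
        rw [hM]
        apply integral_congr_ae
        filter_upwards with ω
        rw [if_pos (lt_of_lt_of_le h (abs_nonneg _))]
      have : G (K x) = K x / ∫ ω, |X ω| := by
        rw [hG, hH0, hM0, zero_add, sq]
        rw [mul_div_mul_left _ _ h.ne]
      rw [hgk] at this
      have : x < 0 := this ▸ div_neg_of_neg_of_pos h hpos
      linarith
    · rw [h] at hgk
      have hg0 : G 0 = 0 := by rw [hG]; simp
      rw [hg0] at hgk
      linarith
  -- K monotone on positives
  have hKmono : ∀ x y : ℝ, 0 < x → x ≤ y → K x ≤ K y := by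
    intro x y hx hxy
    by_contra h
    push_neg at h
    have := hGstrict (K y) (K x) (hKpos y (hx.trans_le hxy)) h
    rw [hGK x hx, hGK y (hx.trans_le hxy)] at this
    linarith
  -- key identity
  have hkey : ∀ x : ℝ, 0 < x → K x / Real.sqrt x = Real.sqrt (F (K x)) := by
    intro x hx
    have ht : 0 < K x := hKpos x hx
    have hFt : 0 < F (K x) := hFpos _ ht
    have hxeq : x = (K x)^2 / F (K x) := by rw [← hGF _ ht, hGK x hx]
    have hx2 : x * F (K x) = (K x)^2 := by
      nth_rewrite 1 [hxeq]
      field_simp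
    have hsq : Real.sqrt x * Real.sqrt (F (K x)) = K x := by
      rw [← Real.sqrt_mul hx.le, hx2, Real.sqrt_sq ht.le]
    rw [div_eq_iff (Real.sqrt_pos.mpr hx).ne', mul_comm]
    exact hsq.symm
  -- Monotone part
  have part1 : MonotoneOn (fun x => K x / Real.sqrt x) (Ioi 0) := by
    intro x hx y hy hxy
    simp only
    rw [hkey x hx, hkey y hy]
    exact Real.sqrt_le_sqrt (hFmono (hKmono x y hx hxy))
  -- L positive
  set L : ℝ≥0∞ := ∫⁻ ω, ENNReal.ofReal ((X ω)^2) with hLdef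
  have hmeasE : Measurable fun ω => ENNReal.ofReal ((X ω)^2) :=
    (hX.pow_const 2).ennreal_ofReal
  have hLpos : 0 < L := by
    rw [pos_iff_ne_zero]
    intro h0
    have hz : (fun ω => ENNReal.ofReal ((X ω)^2)) =ᵐ[ℙ] 0 :=
      (lintegral_eq_zero_iff hmeasE).mp h0
    have : (fun ω => |X ω|) =ᵐ[ℙ] 0 := by
      filter_upwards [hz] with ω hω
      simp only [Pi.zero_apply, ENNReal.ofReal_eq_zero] at hω
      have : (X ω)^2 = 0 := le_antisymm hω (sq_nonneg _)
      simp only [Pi.zero_apply]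
      rw [abs_eq_zero]
      exact pow_eq_zero_iff two_ne_zero |>.mp this
    have : ∫ ω, |X ω| = 0 := integral_eq_zero_of_ae this
    linarith
  have part2 : 0 < L ^ (1/2 : ℝ) := by
    rcases eq_or_ne L ⊤ with h | h
    · rw [h, ENNReal.top_rpow_of_pos (by norm_num)]
      exact ENNReal.zero_lt_top
    · exact ENNReal.rpow_pos hLpos h
  -- the φ function
  set φ : ℝ → ℝ≥0∞ := fun t => ∫⁻ ω, ENNReal.ofReal (min ((X ω)^2) (t * |X ω|)) with hφdef
  have hφmono : Monotone φ := by
    intro s t hst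
    apply lintegral_mono
    intro ω
    exact ENNReal.ofReal_le_ofReal (min_le_min le_rfl
      (mul_le_mul_of_nonneg_right hst (abs_nonneg _)))
  have hφF : ∀ t : ℝ, 0 < t → ENNReal.ofReal (F t) = φ t := by
    intro t ht
    exact ofReal_integral_eq_lintegral_ofReal (hintF t)
      (Filter.Eventually.of_forall (hFnonneg t ht))
  have hφsup : ⨆ t : ℝ, φ t = L := by
    apply le_antisymm
    · apply iSup_le
      intro t
      apply lintegral_mono
      intro ω
      exact ENNReal.ofReal_le_ofReal (min_le_left _ _)
    · have hseq : (⨆ n : ℕ, φ (n : ℝ)) = L := by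
        rw [hφdef]
        simp only
        rw [← lintegral_iSup (fun n => ((hX.pow_const 2).min (hX.abs.const_mul _)).ennreal_ofReal)
          (fun m n hmn => fun ω => ENNReal.ofReal_le_ofReal (min_le_min le_rfl
            (mul_le_mul_of_nonneg_right (Nat.cast_le.mpr hmn) (abs_nonneg _))))]
        apply lintegral_congr
        intro ω
        apply le_antisymm
        · exact iSup_le fun n => ENNReal.ofReal_le_ofReal (min_le_left _ _)
        · apply le_iSup_of_le ⌈|X ω|⌉₊
          apply ENNReal.ofReal_le_ofReal
          rw [min_eq_left]
          calc (X ω)^2 = |X ω| * |X ω| := by rw [← sq_abs]; ring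
            _ ≤ (⌈|X ω|⌉₊ : ℝ) * |X ω| :=
              mul_le_mul_of_nonneg_right (Nat.le_ceil _) (abs_nonneg _)
      calc L = ⨆ n : ℕ, φ (n : ℝ) := hseq.symm
        _ ≤ ⨆ t : ℝ, φ t := iSup_le fun n => le_iSup φ (n : ℝ)
  have hφtendsto : Tendsto φ atTop (nhds L) := hφsup ▸ tendsto_atTop_iSup hφmono
  -- K tends to infinity
  have hKtop : Tendsto K atTop atTop := by
    rw [tendsto_atTop]
    intro b
    set T := max b 1 with hT
    have hT1 : 0 < T := lt_of_lt_of_le one_pos (le_max_right _ _)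
    have hGT : 0 < G T := hGpos T hT1
    filter_upwards [eventually_ge_atTop (max (G T) 1)] with x hx
    have hx1 : 0 < x := lt_of_lt_of_le one_pos (le_trans (le_max_right _ _) hx)
    calc b ≤ T := le_max_left _ _
      _ = K (G T) := (hKG T hT1).symm
      _ ≤ K x := hKmono (G T) x hGT (le_trans (le_max_left _ _) hx)
  -- final tendsto
  have hcomp : Tendsto (fun x => φ (K x)) atTop (nhds L) := hφtendsto.comp hKtop
  have hrpow : Tendsto (fun x => (φ (K x)) ^ (1/2 : ℝ)) atTop (nhds (L ^ (1/2 : ℝ))) :=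
    (ENNReal.continuous_rpow_const.tendsto L).comp hcomp
  refine ⟨part1, part2, ?_⟩
  apply hrpow.congr'
  filter_upwards [eventually_gt_atTop (0:ℝ)] with x hx
  have ht : 0 < K x := hKpos x hx
  rw [← hφF (K x) ht, ENNReal.ofReal_rpow_of_nonneg (hFpos _ ht).le (by norm_num),
    hkey x hx, ← Real.sqrt_eq_rpow]
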